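/- Let P and Q be joint distributions of a pair (X_v, X_t) over a finite product set, and let M = (P + Q)/2. Then 2·D_JS(P_{X_v X_t} ‖ Q_{X_v X_t}) ≤ D_JS(P_{X_v} ‖ Q_{X_v}) + D_JS(P_{X_t} ‖ Q_{X_t}) + D̄_JS(P_{X_t|X_v} ‖ Q_{X_t|X_v}) + D̄_JS(P_{X_v|X_t} ‖ Q_{X_v|X_t}), where D̄_JS(P_{A|B}‖Q_{A|B}) := E_{b∼P_B}[D_JS(P_{A|B=b}‖Q_{A|B=b})] + E_{b∼Q_B}[D_JS(P_{A|B=b}‖Q_{A|B=b})]. -/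

import Mathlib

open Finset Real

/-- A probability mass function on a finite type. -/
def IsPMF {α : Type*} [Fintype α] (p : α → ℝ) : Prop :=
  (∀ x, 0 ≤ p x) ∧ ∑ x, p x = 1

/-- Shannon entropy (natural log). -/
noncomputable def entropy {α : Type*} [Fintype α] (p : α → ℝ) : ℝ :=
  -∑ x, p x * Real.log (p x)

/-- Kullback–Leibler divergence (natural log). -/
noncomputable def klDiv {α : Type*} [Fintype α] (p q : α → ℝ) : ℝ :=
  ∑ x, p x * Real.log (p x / q x)

/-- Jensen–Shannon divergence. -/
noncomputable def jsDiv {α : Type*} [Fintype α] (p q : α → ℝ) : ℝ :=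
  (klDiv p (fun x => (p x + q x) / 2) + klDiv q (fun x => (p x + q x) / 2)) / 2

/-- Un-halved (ℓ¹) total variation distance. -/
noncomputable def tvL1 {α : Type*} [Fintype α] (p q : α → ℝ) : ℝ :=
  ∑ x, |p x - q x|
section AuxLemmas

private lemma aux_ratio_log {u m : ℝ} (hu : 0 ≤ u) (h : u ≠ 0 → 0 < m) :
    u * Real.log (u / m) = u * Real.log u - u * Real.log m := by
  rcases eq_or_lt_of_le hu with h0 | h0
  · simp [← h0]
  · have hm := h h0.ne'
    rw [Real.log_div h0.ne' hm.ne']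
    ring

private lemma aux_phi_weighted {u w a b : ℝ} (hu : 0 ≤ u) (hw : 0 ≤ w) (ha : 0 ≤ a) (hb : 0 ≤ b)
    (hs : 0 < a + b) :
    a * (u * Real.log u) + b * (w * Real.log w)
      - (a * u + b * w) * Real.log ((a * u + b * w) / (a + b))
    ≤ (a + b) * (u * Real.log u + w * Real.log w - (u + w) * Real.log ((u + w) / 2)) := by
  have hconv := Real.convexOn_mul_log
  have hm1 : (0:ℝ) ≤ (a * u + b * w) / (a + b) := by positivity
  have hm2 : (0:ℝ) ≤ (b * u + a * w) / (a + b) := by positivity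
  have hC1 := hconv.2 (Set.mem_Ici.mpr hm1) (Set.mem_Ici.mpr hm2)
    (by norm_num : (0:ℝ) ≤ 1/2) (by norm_num : (0:ℝ) ≤ 1/2) (by norm_num)
  have hC2 := hconv.2 (Set.mem_Ici.mpr hu) (Set.mem_Ici.mpr hw)
    (by positivity : (0:ℝ) ≤ b / (a+b)) (by positivity : (0:ℝ) ≤ a / (a+b))
    (by rw [← add_div, add_comm]; exact div_self hs.ne')
  simp only [smul_eq_mul] at hC1 hC2
  have e1 : (1:ℝ)/2 * ((a * u + b * w) / (a + b)) + 1/2 * ((b * u + a * w) / (a + b))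
      = (u + w) / 2 := by field_simp; ring
  rw [e1] at hC1
  have e2 : b / (a + b) * u + a / (a + b) * w = (b * u + a * w) / (a + b) := by
    field_simp
  rw [e2] at hC2
  have hC2' : (a + b) * (((b * u + a * w) / (a + b)) * Real.log ((b * u + a * w) / (a + b)))
      ≤ b * (u * Real.log u) + a * (w * Real.log w) := by
    have := mul_le_mul_of_nonneg_left hC2 hs.le
    calc (a + b) * (((b * u + a * w) / (a + b)) * Real.log ((b * u + a * w) / (a + b)))
        ≤ (a + b) * (b / (a + b) * (u * Real.log u) + a / (a + b) * (w * Real.log w)) := this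
      _ = b * (u * Real.log u) + a * (w * Real.log w) := by field_simp
  have hC1' : (a + b) * ((u + w) * Real.log ((u + w) / 2))
      ≤ (a + b) * ((a * u + b * w) / (a + b) * Real.log ((a * u + b * w) / (a + b)))
        + (a + b) * ((b * u + a * w) / (a + b) * Real.log ((b * u + a * w) / (a + b))) := by
    have := mul_le_mul_of_nonneg_left hC1 (by positivity : (0:ℝ) ≤ 2 * (a + b))
    calc (a + b) * ((u + w) * Real.log ((u + w) / 2))
        = 2 * (a + b) * ((u + w) / 2 * Real.log ((u + w) / 2)) := by ring
      _ ≤ 2 * (a + b) * (1/2 * ((a * u + b * w) / (a + b) * Real.log ((a * u + b * w) / (a + b)))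
          + 1/2 * ((b * u + a * w) / (a + b) * Real.log ((b * u + a * w) / (a + b)))) := this
      _ = _ := by ring
  have e3 : (a + b) * ((a * u + b * w) / (a + b) * Real.log ((a * u + b * w) / (a + b)))
      = (a * u + b * w) * Real.log ((a * u + b * w) / (a + b)) := by
    field_simp
  rw [e3] at hC1'
  linarith

private lemma aux_key {x y a b : ℝ} (hx : 0 ≤ x) (hy : 0 ≤ y) (ha : 0 ≤ a) (hb : 0 ≤ b)
    (hxa : a = 0 → x = 0) (hyb : b = 0 → y = 0) :
    x * Real.log (x / ((x + y) / 2)) + y * Real.log (y / ((x + y) / 2))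
    ≤ x * Real.log (2 * a / (a + b)) + y * Real.log (2 * b / (a + b))
      + (a + b) * (x / a * Real.log (x / a / ((x / a + y / b) / 2))
               + y / b * Real.log (y / b / ((x / a + y / b) / 2))) := by
  rcases eq_or_lt_of_le (by positivity : (0:ℝ) ≤ a + b) with hs | hs
  · have ha0 : a = 0 := by linarith
    have hb0 : b = 0 := by linarith
    simp [ha0, hb0, hxa ha0, hyb hb0]
  · have hax : a * (x / a) = x := by
      rcases eq_or_lt_of_le ha with h0 | h0
      · simp [← h0, hxa h0.symm]
      · field_simp
    have hby : b * (y / b) = y := by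
      rcases eq_or_lt_of_le hb with h0 | h0
      · simp [← h0, hyb h0.symm]
      · field_simp
    have hu : 0 ≤ x / a := by positivity
    have hw : 0 ≤ y / b := by positivity
    have E1 : x * Real.log (x / ((x + y) / 2))
        = x * Real.log (2 * a / (a + b)) + a * (x / a * Real.log (x / a))
          - x * Real.log ((x + y) / (a + b)) := by
      rcases eq_or_lt_of_le hx with h0 | h0
      · simp [← h0]
      · have ha' : 0 < a := lt_of_le_of_ne ha (fun h => h0.ne' (hxa h.symm))
        have hxy : 0 < x + y := by linarith
        rw [Real.log_div h0.ne' (by positivity : ((x+y)/2 : ℝ) ≠ 0),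
            Real.log_div (by positivity : (2*a : ℝ) ≠ 0) hs.ne',
            Real.log_div h0.ne' ha'.ne',
            Real.log_div hxy.ne' hs.ne',
            Real.log_div hxy.ne' (two_ne_zero),
            Real.log_mul (two_ne_zero) ha'.ne']
        field_simp
        ring
    have E2 : y * Real.log (y / ((x + y) / 2))
        = y * Real.log (2 * b / (a + b)) + b * (y / b * Real.log (y / b))
          - y * Real.log ((x + y) / (a + b)) := by
      rcases eq_or_lt_of_le hy with h0 | h0
      · simp [← h0]
      · have hb' : 0 < b := lt_of_le_of_ne hb (fun h => h0.ne' (hyb h.symm))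
        have hxy : 0 < x + y := by linarith
        rw [Real.log_div h0.ne' (by positivity : ((x+y)/2 : ℝ) ≠ 0),
            Real.log_div (by positivity : (2*b : ℝ) ≠ 0) hs.ne',
            Real.log_div h0.ne' hb'.ne',
            Real.log_div hxy.ne' hs.ne',
            Real.log_div hxy.ne' (two_ne_zero),
            Real.log_mul (two_ne_zero) hb'.ne']
        field_simp
        ring
    have RL1 : x / a * Real.log (x / a / ((x / a + y / b) / 2))
        = x / a * Real.log (x / a) - x / a * Real.log ((x / a + y / b) / 2) :=
      aux_ratio_log hu (fun h => by
        have : 0 < x / a := lt_of_le_of_ne hu (Ne.symm h)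
        positivity)
    have RL2 : y / b * Real.log (y / b / ((x / a + y / b) / 2))
        = y / b * Real.log (y / b) - y / b * Real.log ((x / a + y / b) / 2) :=
      aux_ratio_log hw (fun h => by
        have : 0 < y / b := lt_of_le_of_ne hw (Ne.symm h)
        positivity)
    have PW := aux_phi_weighted hu hw ha hb hs
    rw [hax, hby] at PW
    rw [E1, E2, RL1, RL2]
    nlinarith [PW]

private lemma aux_step {T : Type*} [Fintype T] (f g : T → ℝ)
    (hf : ∀ t, 0 ≤ f t) (hg : ∀ t, 0 ≤ g t) :
    (∑ t, f t * Real.log (f t / ((f t + g t) / 2)))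
      + (∑ t, g t * Real.log (g t / ((f t + g t) / 2)))
    ≤ (∑ t, f t) * Real.log ((∑ t, f t) / (((∑ t, f t) + (∑ t, g t)) / 2))
      + (∑ t, g t) * Real.log ((∑ t, g t) / (((∑ t, f t) + (∑ t, g t)) / 2))
      + 2 * ((∑ t, f t) + (∑ t, g t))
          * jsDiv (fun t => f t / ∑ t', f t') (fun t => g t / ∑ t', g t') := by
  have ha0 : 0 ≤ ∑ t, f t := Finset.sum_nonneg (fun t _ => hf t)
  have hb0 : 0 ≤ ∑ t, g t := Finset.sum_nonneg (fun t _ => hg t)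
  have hfa : ∀ t, (∑ t', f t') = 0 → f t = 0 := fun t h =>
    (Finset.sum_eq_zero_iff_of_nonneg (fun t _ => hf t)).mp h t (Finset.mem_univ t)
  have hgb : ∀ t, (∑ t', g t') = 0 → g t = 0 := fun t h =>
    (Finset.sum_eq_zero_iff_of_nonneg (fun t _ => hg t)).mp h t (Finset.mem_univ t)
  calc (∑ t, f t * Real.log (f t / ((f t + g t) / 2)))
        + (∑ t, g t * Real.log (g t / ((f t + g t) / 2)))
      = ∑ t, (f t * Real.log (f t / ((f t + g t) / 2))
          + g t * Real.log (g t / ((f t + g t) / 2))) := Finset.sum_add_distrib.symm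
    _ ≤ ∑ t, (f t * Real.log (2 * (∑ t', f t') / ((∑ t', f t') + (∑ t', g t')))
          + g t * Real.log (2 * (∑ t', g t') / ((∑ t', f t') + (∑ t', g t')))
          + ((∑ t', f t') + (∑ t', g t'))
            * (f t / (∑ t', f t') * Real.log (f t / (∑ t', f t')
                  / ((f t / (∑ t', f t') + g t / (∑ t', g t')) / 2))
             + g t / (∑ t', g t') * Real.log (g t / (∑ t', g t')
                  / ((f t / (∑ t', f t') + g t / (∑ t', g t')) / 2)))) :=
        Finset.sum_le_sum (fun t _ => aux_key (hf t) (hg t) ha0 hb0 (hfa t) (hgb t))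
    _ = _ := by
        rw [Finset.sum_add_distrib, Finset.sum_add_distrib, ← Finset.sum_mul, ← Finset.sum_mul,
          ← Finset.mul_sum]
        have e1 : (∑ t, f t) / (((∑ t, f t) + (∑ t, g t)) / 2)
            = 2 * (∑ t, f t) / ((∑ t, f t) + (∑ t, g t)) := by
          rw [div_div_eq_mul_div]; ring_nf
        have e2 : (∑ t, g t) / (((∑ t, f t) + (∑ t, g t)) / 2)
            = 2 * (∑ t, g t) / ((∑ t, f t) + (∑ t, g t)) := by
          rw [div_div_eq_mul_div]; ring_nf
        rw [e1, e2]
        simp only [jsDiv, klDiv, Finset.sum_add_distrib]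
        ring

private lemma aux_main_half {V T : Type*} [Fintype V] [Fintype T] (p q : V × T → ℝ)
    (hp : ∀ x, 0 ≤ p x) (hq : ∀ x, 0 ≤ q x) :
    2 * jsDiv p q ≤ 2 * jsDiv (fun v => ∑ t, p (v, t)) (fun v => ∑ t, q (v, t))
      + 2 * ∑ v, ((∑ t, p (v, t)) + (∑ t, q (v, t))) *
          jsDiv (fun t => p (v, t) / ∑ t', p (v, t')) (fun t => q (v, t) / ∑ t', q (v, t')) := by
  have H : ∀ v : V,
      (∑ t, p (v, t) * Real.log (p (v, t) / ((p (v, t) + q (v, t)) / 2)))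
        + (∑ t, q (v, t) * Real.log (q (v, t) / ((p (v, t) + q (v, t)) / 2)))
      ≤ (∑ t, p (v, t)) * Real.log ((∑ t, p (v, t)) / (((∑ t, p (v, t)) + (∑ t, q (v, t))) / 2))
        + (∑ t, q (v, t)) * Real.log ((∑ t, q (v, t)) / (((∑ t, p (v, t)) + (∑ t, q (v, t))) / 2))
        + 2 * ((∑ t, p (v, t)) + (∑ t, q (v, t)))
            * jsDiv (fun t => p (v, t) / ∑ t', p (v, t')) (fun t => q (v, t) / ∑ t', q (v, t')) :=
    fun v => aux_step (fun t => p (v, t)) (fun t => q (v, t)) (fun t => hp _) (fun t => hq _)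
  have HS := Finset.sum_le_sum (fun v (_ : v ∈ Finset.univ) => H v)
  simp only [jsDiv, klDiv]
  rw [Fintype.sum_prod_type, Fintype.sum_prod_type]
  simp only [Finset.sum_add_distrib] at HS
  have e : ∑ v, 2 * ((∑ t, p (v, t)) + (∑ t, q (v, t)))
            * jsDiv (fun t => p (v, t) / ∑ t', p (v, t')) (fun t => q (v, t) / ∑ t', q (v, t'))
      = 2 * ∑ v, ((∑ t, p (v, t)) + (∑ t, q (v, t)))
            * jsDiv (fun t => p (v, t) / ∑ t', p (v, t')) (fun t => q (v, t) / ∑ t', q (v, t')) := by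
    rw [Finset.mul_sum]; congr 1; ext v; ring
  rw [e] at HS
  simp only [jsDiv, klDiv] at HS
  linarith

private lemma aux_jsDiv_swap {V T : Type*} [Fintype V] [Fintype T] (p q : V × T → ℝ) :
    jsDiv (fun x : T × V => p (x.2, x.1)) (fun x : T × V => q (x.2, x.1)) = jsDiv p q := by
  simp only [jsDiv, klDiv]
  congr 1
  congr 1
  · exact Fintype.sum_equiv (Equiv.prodComm T V) _ _ (fun x => rfl)
  · exact Fintype.sum_equiv (Equiv.prodComm T V) _ _ (fun x => rfl)

end AuxLemmas

theorem joint_js_chain_rule_bound {V T : Type*} [Fintype V] [Fintype T]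
    (p q : V × T → ℝ) (hp : IsPMF p) (hq : IsPMF q) :
    2 * jsDiv p q ≤
      jsDiv (fun v => ∑ t, p (v, t)) (fun v => ∑ t, q (v, t)) +
      jsDiv (fun t => ∑ v, p (v, t)) (fun t => ∑ v, q (v, t)) +
      ((∑ v, (∑ t, p (v, t)) *
          jsDiv (fun t => p (v, t) / ∑ t', p (v, t'))
                (fun t => q (v, t) / ∑ t', q (v, t'))) +
       (∑ v, (∑ t, q (v, t)) *
          jsDiv (fun t => p (v, t) / ∑ t', p (v, t'))
                (fun t => q (v, t) / ∑ t', q (v, t')))) +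
      ((∑ t, (∑ v, p (v, t)) *
          jsDiv (fun v => p (v, t) / ∑ v', p (v', t))
                (fun v => q (v, t) / ∑ v', q (v', t))) +
       (∑ t, (∑ v, q (v, t)) *
          jsDiv (fun v => p (v, t) / ∑ v', p (v', t))
                (fun v => q (v, t) / ∑ v', q (v', t)))) := by
  have h1 := aux_main_half p q hp.1 hq.1
  have h2 := aux_main_half (fun x : T × V => p (x.2, x.1)) (fun x : T × V => q (x.2, x.1))
    (fun x => hp.1 _) (fun x => hq.1 _)
  rw [aux_jsDiv_swap] at h2
  simp only at h2
  have eV : ∑ v, ((∑ t, p (v, t)) + (∑ t, q (v, t))) *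
        jsDiv (fun t => p (v, t) / ∑ t', p (v, t')) (fun t => q (v, t) / ∑ t', q (v, t'))
      = (∑ v, (∑ t, p (v, t)) *
          jsDiv (fun t => p (v, t) / ∑ t', p (v, t')) (fun t => q (v, t) / ∑ t', q (v, t')))
        + (∑ v, (∑ t, q (v, t)) *
          jsDiv (fun t => p (v, t) / ∑ t', p (v, t')) (fun t => q (v, t) / ∑ t', q (v, t'))) := by
    rw [← Finset.sum_add_distrib]
    exact Finset.sum_congr rfl (fun v _ => add_mul _ _ _)
  have eT : ∑ t, ((∑ v, p (v, t)) + (∑ v, q (v, t))) *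
        jsDiv (fun v => p (v, t) / ∑ v', p (v', t)) (fun v => q (v, t) / ∑ v', q (v', t))
      = (∑ t, (∑ v, p (v, t)) *
          jsDiv (fun v => p (v, t) / ∑ v', p (v', t)) (fun v => q (v, t) / ∑ v', q (v', t)))
        + (∑ t, (∑ v, q (v, t)) *
          jsDiv (fun v => p (v, t) / ∑ v', p (v', t)) (fun v => q (v, t) / ∑ v', q (v', t))) := by
    rw [← Finset.sum_add_distrib]
    exact Finset.sum_congr rfl (fun t _ => add_mul _ _ _)
  rw [eV] at h1
  rw [eT] at h2
  linarith
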